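/- arXiv:2504.10549 — 3 statements merged into one kernel-verified Lean document; each statement's English description precedes it below -/
import Mathlib

section
/- Let e₀ > 0 and let 0 < α₁ < α₂ be the two roots of y - ln y - 1 = e₀. If f : [0,1] → ℝ is integrable with f(x) > 0 a.e. and ∫₀¹ (f(x) - ln f(x) - 1) dx ≤ e₀, then α₁ ≤ ∫₀¹ f(x) dx ≤ α₂. -/
open MeasureTheory Set

private lemma phi_strictConvex :
    StrictConvexOn ℝ (Ioi (0:ℝ)) (fun y => y - Real.log y - 1) := by
  have h1 : StrictConvexOn ℝ (Ioi (0:ℝ)) (fun y => -Real.log y) :=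
    strictConcaveOn_log_Ioi.neg
  have h2 : ConvexOn ℝ (Ioi (0:ℝ)) (fun y : ℝ => y - 1) :=
    (convexOn_id (convex_Ioi 0)).sub (concaveOn_const 1 (convex_Ioi 0))
  have h := h1.add_convexOn h2
  have e : (fun y : ℝ => y - Real.log y - 1) = ((fun y => -Real.log y) + fun y => y - 1) := by
    funext y; simp only [Pi.add_apply]; ring
  rw [e]; exact h

private lemma phi_bound (e₀ α₁ α₂ x : ℝ) (hα1 : 0 < α₁) (hα12 : α₁ < α₂)
    (hroot1 : α₁ - Real.log α₁ - 1 = e₀) (hroot2 : α₂ - Real.log α₂ - 1 = e₀)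
    (hx : 0 < x) (hφx : x - Real.log x - 1 ≤ e₀) : α₁ ≤ x ∧ x ≤ α₂ := by
  have hsc := phi_strictConvex
  constructor
  · by_contra h
    push_neg at h
    set t : ℝ := (α₂ - α₁) / (α₂ - x) with ht
    have hxα2 : x < α₂ := h.trans hα12
    have ht0 : 0 < t := by apply div_pos <;> linarith
    have ht1 : t < 1 := by rw [div_lt_one (by linarith)]; linarith
    have hne : α₂ - x ≠ 0 := by linarith
    have hcomb : t • x + (1 - t) • α₂ = α₁ := by
      rw [ht, smul_eq_mul, smul_eq_mul, div_mul_eq_mul_div, one_sub_div hne,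
        div_mul_eq_mul_div, ← add_div, div_eq_iff hne]
      ring
    have key := hsc.2 (mem_Ioi.mpr hx) (mem_Ioi.mpr (hα1.trans hα12))
      (by linarith : x ≠ α₂) ht0 (by linarith : (0:ℝ) < 1 - t) (by ring)
    rw [hcomb] at key
    simp only [smul_eq_mul] at key
    nlinarith [key]
  · by_contra h
    push_neg at h
    set t : ℝ := (x - α₂) / (x - α₁) with ht
    have hα1x : α₁ < x := hα12.trans h
    have ht0 : 0 < t := by apply div_pos <;> linarith
    have ht1 : t < 1 := by rw [div_lt_one (by linarith)]; linarith
    have hne : x - α₁ ≠ 0 := by linarith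
    have hcomb : t • α₁ + (1 - t) • x = α₂ := by
      rw [ht, smul_eq_mul, smul_eq_mul, div_mul_eq_mul_div, one_sub_div hne,
        div_mul_eq_mul_div, ← add_div, div_eq_iff hne]
      ring
    have key := hsc.2 (mem_Ioi.mpr hα1) (mem_Ioi.mpr hx)
      (by linarith : α₁ ≠ x) ht0 (by linarith : (0:ℝ) < 1 - t) (by ring)
    rw [hcomb] at key
    simp only [smul_eq_mul] at key
    nlinarith [key]

theorem stmt0 (e₀ α₁ α₂ : ℝ) (he₀ : 0 < e₀) (hα1 : 0 < α₁) (hα12 : α₁ < α₂)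
    (hroot1 : α₁ - Real.log α₁ - 1 = e₀) (hroot2 : α₂ - Real.log α₂ - 1 = e₀)
    (f : ℝ → ℝ) (hf : IntegrableOn f (Icc (0:ℝ) 1))
    (hfpos : ∀ᵐ x ∂(volume.restrict (Icc (0:ℝ) 1)), 0 < f x)
    (hfint : IntegrableOn (fun x => f x - Real.log (f x) - 1) (Icc (0:ℝ) 1))
    (hbound : ∫ x in Icc (0:ℝ) 1, (f x - Real.log (f x) - 1) ≤ e₀) :
    α₁ ≤ ∫ x in Icc (0:ℝ) 1, f x ∧ ∫ x in Icc (0:ℝ) 1, f x ≤ α₂ := by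
  set M := ∫ x in Icc (0:ℝ) 1, f x with hMdef
  have hvol : (volume.restrict (Icc (0:ℝ) 1)) univ = 1 := by
    rw [Measure.restrict_apply_univ]; simp
  -- integrability of log ∘ f
  have hone : IntegrableOn (fun _ : ℝ => (1:ℝ)) (Icc (0:ℝ) 1) := (integrableOn_const_iff).mpr
    (Or.inr (by simp [lt_top_iff_ne_top]))
  have hlog : IntegrableOn (fun x => Real.log (f x)) (Icc (0:ℝ) 1) :=
    ((hf.sub hone).sub hfint).congr
      (Filter.Eventually.of_forall fun x => by simp only [Pi.sub_apply]; ring)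
  -- M > 0
  have hMpos : 0 < M := by
    rw [hMdef, integral_pos_iff_support_of_nonneg_ae
      (hfpos.mono fun x hx => hx.le) hf]
    have hc0 : (volume.restrict (Icc (0:ℝ) 1)) (Function.support f)ᶜ = 0 := by
      apply measure_mono_null ?_ (ae_iff.mp hfpos)
      intro x hx
      simp only [Function.mem_support, not_not, mem_compl_iff] at hx ⊢
      simp [hx]
    have h2 := measure_union_le (μ := volume.restrict (Icc (0:ℝ) 1))
      (Function.support f) (Function.support f)ᶜ
    rw [union_compl_self, hvol, hc0, add_zero] at h2
    exact lt_of_lt_of_le one_pos h2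
  -- integral of constant 1
  have hint1 : ∫ _ in Icc (0:ℝ) 1, (1:ℝ) = 1 := by simp
  -- Jensen via tangent line: ∫ log f ≤ log M
  have hjensen : ∫ x in Icc (0:ℝ) 1, Real.log (f x) ≤ Real.log M := by
    have hptwise : ∀ᵐ x ∂(volume.restrict (Icc (0:ℝ) 1)),
        Real.log (f x) ≤ Real.log M + f x / M - 1 := by
      filter_upwards [hfpos] with x hx
      have h1 : Real.log (f x / M) ≤ f x / M - 1 :=
        Real.log_le_sub_one_of_pos (div_pos hx hMpos)
      rw [Real.log_div (ne_of_gt hx) (ne_of_gt hMpos)] at h1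
      linarith
    have hconstint : IntegrableOn (fun _ : ℝ => Real.log M) (Icc (0:ℝ) 1) :=
      (integrableOn_const_iff).mpr (Or.inr (by simp [lt_top_iff_ne_top]))
    have hdiv : IntegrableOn (fun x => f x / M) (Icc (0:ℝ) 1) := hf.div_const M
    have hsum : IntegrableOn (fun x => Real.log M + f x / M) (Icc (0:ℝ) 1) :=
      hconstint.add hdiv
    have hrhs : IntegrableOn (fun x => Real.log M + f x / M - 1) (Icc (0:ℝ) 1) :=
      hsum.sub hone
    have := integral_mono_ae hlog hrhs hptwise
    rw [integral_sub hsum hone, integral_add hconstint hdiv,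
      hint1, integral_div] at this
    have hconst : ∫ _ in Icc (0:ℝ) 1, Real.log M = Real.log M := by simp
    rw [hconst, ← hMdef, div_self (ne_of_gt hMpos)] at this
    linarith
  -- φ(M) ≤ e₀
  have hsplit : ∫ x in Icc (0:ℝ) 1, (f x - Real.log (f x) - 1)
      = M - (∫ x in Icc (0:ℝ) 1, Real.log (f x)) - 1 := by
    have hsub : IntegrableOn (fun x => f x - Real.log (f x)) (Icc (0:ℝ) 1) :=
      hf.sub hlog
    rw [integral_sub hsub hone, integral_sub hf hlog, hint1, hMdef]
  have hφM : M - Real.log M - 1 ≤ e₀ := by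
    rw [hsplit] at hbound
    linarith
  exact phi_bound e₀ α₁ α₂ M hα1 hα12 hroot1 hroot2 hMpos hφM
end

section
/- Let v : [0,∞) → [0,∞) be such that there exist constants C > 0, α₁ > 0 with v(t) ≥ C⁻¹ ∫_0^t e^{-(t-s)/C} (α₁/4 - C V(s)) ds for all t, where V ≥ 0 is integrable on [0,∞). Then there exist T₀ > 0 and C₀ > 0 (depending only on C, α₁, ∫_0^∞ V) such that v(t) ≥ C₀/2 for all t ≥ T₀. -/
open MeasureTheory Set Filter

set_option maxHeartbeats 1000000 in
theorem stmt8 (C α₁ : ℝ) (hC : 0 < C) (hα₁ : 0 < α₁) (V : ℝ → ℝ)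
    (hV : ∀ t, 0 ≤ V t) (hVint : IntegrableOn V (Ici (0:ℝ))) :
    ∃ T₀ C₀ : ℝ, 0 < T₀ ∧ 0 < C₀ ∧
      ∀ v : ℝ → ℝ, (∀ t, 0 ≤ v t) →
        (∀ t : ℝ, 0 ≤ t →
          C⁻¹ * ∫ s in Icc (0:ℝ) t, Real.exp (-(t - s) / C) * (α₁ / 4 - C * V s) ≤ v t) →
        ∀ t, T₀ ≤ t → C₀ / 2 ≤ v t := by
  set I := ∫ s in Ici (0:ℝ), V s with hIdef
  have hI0 : 0 ≤ I := setIntegral_nonneg measurableSet_Ici fun s _ => hV s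
  set ε := α₁ / 32 with hεdef
  have hε0 : 0 < ε := by positivity
  clear_value I ε
  have hVIoi : IntegrableOn V (Ioi (0:ℝ)) := hVint.mono_set Ioi_subset_Ici_self
  -- tail of the integral of V is eventually small
  obtain ⟨T₁, hT₁0, hT₁⟩ : ∃ T₁, 0 ≤ T₁ ∧ ∫ s in Ioi T₁, V s ≤ ε := by
    have htend := intervalIntegral_tendsto_integral_Ioi 0 hVIoi tendsto_id
    have h1 : ∀ᶠ T in atTop, (∫ s in Ioi (0:ℝ), V s) - ε < ∫ s in (0:ℝ)..T, V s :=
      htend.eventually (eventually_gt_nhds (by linarith))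
    obtain ⟨T₁, hlt, hT₁0⟩ := (h1.and (eventually_ge_atTop (0:ℝ))).exists
    refine ⟨T₁, hT₁0, ?_⟩
    have hVIoiT : IntegrableOn V (Ioi T₁) := hVIoi.mono_set (Ioi_subset_Ioi hT₁0)
    have hVIoc : IntegrableOn V (Ioc 0 T₁) := hVIoi.mono_set Ioc_subset_Ioi_self
    have hdisj : Disjoint (Ioc (0:ℝ) T₁) (Ioi T₁) := by
      rw [Set.disjoint_left]; rintro s ⟨_, h2⟩ h3
      exact absurd (mem_Ioi.1 h3) (not_lt.2 h2)
    have hun : Ioc (0:ℝ) T₁ ∪ Ioi T₁ = Ioi (0:ℝ) := Ioc_union_Ioi_eq_Ioi hT₁0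
    have hadd : ∫ s in Ioi (0:ℝ), V s
        = (∫ s in Ioc (0:ℝ) T₁, V s) + ∫ s in Ioi T₁, V s := by
      rw [← hun, setIntegral_union hdisj measurableSet_Ioi hVIoc hVIoiT]
    rw [intervalIntegral.integral_of_le hT₁0] at hlt
    linarith
  refine ⟨max (T₁ + C * |Real.log ((I + 1) / ε)| + 1) (C * Real.log 2), α₁ / 8,
    ?_, by positivity, ?_⟩
  · have : 0 < C * Real.log 2 := mul_pos hC (Real.log_pos one_lt_two)
    exact lt_of_lt_of_le this (le_max_right _ _)
  intro v hv0 hvineq t ht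
  have htT₁ : T₁ ≤ t := by
    have h1 : 0 ≤ C * |Real.log ((I + 1) / ε)| := by positivity
    have := le_trans (le_max_left _ (C * Real.log 2)) ht
    linarith
  have ht0 : 0 ≤ t := le_trans hT₁0 htT₁
  -- integrability facts
  have hEcont : Continuous fun s : ℝ => Real.exp (-(t - s) / C) := by continuity
  have hEint : IntegrableOn (fun s : ℝ => Real.exp (-(t - s) / C)) (Icc 0 t) :=
    hEcont.integrableOn_Icc
  have hVIcc : IntegrableOn V (Icc 0 t) := hVint.mono_set Icc_subset_Ici_self
  have hEV : IntegrableOn (fun s : ℝ => Real.exp (-(t - s) / C) * V s) (Icc 0 t) := by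
    apply Integrable.bdd_mul (c := 1) hVIcc (hEcont.aestronglyMeasurable.restrict)
    filter_upwards [ae_restrict_mem measurableSet_Icc] with s hs
    rw [Real.norm_eq_abs, abs_of_pos (Real.exp_pos _)]
    apply Real.exp_le_one_iff.2
    apply div_nonpos_of_nonpos_of_nonneg _ hC.le
    linarith [hs.2]
  -- compute the exponential integral
  have hA : ∫ s in Icc (0:ℝ) t, Real.exp (-(t - s) / C) = C * (1 - Real.exp (-t / C)) := by
    rw [integral_Icc_eq_integral_Ioc, ← intervalIntegral.integral_of_le ht0]
    have heq : ∀ s : ℝ, Real.exp (-(t - s) / C) = Real.exp (-t / C) * Real.exp (s / C) := by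
      intro s; rw [← Real.exp_add]; congr 1; field_simp; ring
    simp_rw [heq]
    rw [intervalIntegral.integral_const_mul]
    have hcomp : ∫ s in (0:ℝ)..t, Real.exp (s / C) = C * (Real.exp (t / C) - 1) := by
      rw [intervalIntegral.integral_comp_div (fun x => Real.exp x) hC.ne']
      rw [integral_exp]
      simp [Real.exp_zero]
    rw [hcomp]
    have h2 : Real.exp (-t / C) * Real.exp (t / C) = 1 := by
      rw [← Real.exp_add, neg_div, neg_add_cancel, Real.exp_zero]
    linear_combination C * h2
  -- decompose the main integral
  have hdecomp : ∫ s in Icc (0:ℝ) t, Real.exp (-(t - s) / C) * (α₁ / 4 - C * V s)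
      = (α₁ / 4 * ∫ s in Icc (0:ℝ) t, Real.exp (-(t - s) / C))
        - C * ∫ s in Icc (0:ℝ) t, Real.exp (-(t - s) / C) * V s := by
    have hsub := integral_sub (μ := volume.restrict (Icc (0:ℝ) t))
      (f := fun s => α₁ / 4 * Real.exp (-(t - s) / C))
      (g := fun s => C * (Real.exp (-(t - s) / C) * V s))
      (hEint.const_mul _) (hEV.const_mul _)
    rw [integral_const_mul, integral_const_mul] at hsub
    refine Eq.trans ?_ hsub
    refine integral_congr_ae (.of_forall fun s => ?_)
    ring
  -- bound the V-part
  set J := ∫ s in Icc (0:ℝ) t, Real.exp (-(t - s) / C) * V s with hJdef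
  have hJle : J ≤ 2 * ε := by
    have hsplit : Icc (0:ℝ) t = Icc 0 T₁ ∪ Ioc T₁ t := (Icc_union_Ioc_eq_Icc hT₁0 htT₁).symm
    have hdisj : Disjoint (Icc (0:ℝ) T₁) (Ioc T₁ t) := by
      rw [Set.disjoint_left]; rintro s ⟨_, h2⟩ ⟨h3, _⟩; linarith
    have hEV1 : IntegrableOn (fun s : ℝ => Real.exp (-(t - s) / C) * V s) (Icc 0 T₁) :=
      hEV.mono_set (Icc_subset_Icc le_rfl htT₁)
    have hEV2 : IntegrableOn (fun s : ℝ => Real.exp (-(t - s) / C) * V s) (Ioc T₁ t) :=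
      hEV.mono_set (fun s hs => ⟨le_trans hT₁0 hs.1.le, hs.2⟩)
    have hJsum : J = (∫ s in Icc (0:ℝ) T₁, Real.exp (-(t - s) / C) * V s)
        + ∫ s in Ioc T₁ t, Real.exp (-(t - s) / C) * V s := by
      rw [hJdef, hsplit, setIntegral_union hdisj measurableSet_Ioc hEV1 hEV2]
    -- first piece
    have hVIccT₁ : IntegrableOn V (Icc 0 T₁) := hVint.mono_set Icc_subset_Ici_self
    have hp1 : (∫ s in Icc (0:ℝ) T₁, Real.exp (-(t - s) / C) * V s) ≤ ε := by
      have hb : (∫ s in Icc (0:ℝ) T₁, Real.exp (-(t - s) / C) * V s)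
          ≤ ∫ s in Icc (0:ℝ) T₁, Real.exp (-(t - T₁) / C) * V s := by
        apply setIntegral_mono_on hEV1 (hVIccT₁.const_mul _) measurableSet_Icc
        intro s hs
        apply mul_le_mul_of_nonneg_right _ (hV s)
        apply Real.exp_le_exp.2
        exact (div_le_div_iff_of_pos_right hC).2 (by linarith [hs.2])
      have hVle : (∫ s in Icc (0:ℝ) T₁, V s) ≤ I := by
        rw [hIdef]
        apply setIntegral_mono_set hVint (Eventually.of_forall hV)
        exact HasSubset.Subset.eventuallyLE Icc_subset_Ici_self
      have hexp : Real.exp (-(t - T₁) / C) ≤ ε / (I + 1) := by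
        have hlog : C * Real.log ((I + 1) / ε) ≤ t - T₁ := by
          have h1 := le_trans (le_max_left _ (C * Real.log 2)) ht
          have h2 : Real.log ((I + 1) / ε) ≤ |Real.log ((I + 1) / ε)| := le_abs_self _
          nlinarith [hC.le]
        have : -(t - T₁) / C ≤ -Real.log ((I + 1) / ε) := by
          rw [div_le_iff₀ hC] at *
          nlinarith
        calc Real.exp (-(t - T₁) / C) ≤ Real.exp (-Real.log ((I + 1) / ε)) :=
              Real.exp_le_exp.2 this
          _ = ε / (I + 1) := by
              rw [Real.exp_neg, Real.exp_log (by positivity)]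
              field_simp
      rw [integral_const_mul] at hb
      calc (∫ s in Icc (0:ℝ) T₁, Real.exp (-(t - s) / C) * V s)
          ≤ Real.exp (-(t - T₁) / C) * ∫ s in Icc (0:ℝ) T₁, V s := hb
        _ ≤ (ε / (I + 1)) * I := by
            apply mul_le_mul hexp hVle (setIntegral_nonneg measurableSet_Icc fun s _ => hV s)
            positivity
        _ ≤ ε := by
            rw [div_mul_eq_mul_div, div_le_iff₀ (by linarith)]
            nlinarith
    -- second piece
    have hVIoc2 : IntegrableOn V (Ioc T₁ t) := hVIcc.mono_set
      (fun s hs => ⟨le_trans hT₁0 hs.1.le, hs.2⟩)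
    have hp2 : (∫ s in Ioc T₁ t, Real.exp (-(t - s) / C) * V s) ≤ ε := by
      have hb : (∫ s in Ioc T₁ t, Real.exp (-(t - s) / C) * V s) ≤ ∫ s in Ioc T₁ t, V s := by
        apply setIntegral_mono_on hEV2 hVIoc2 measurableSet_Ioc
        intro s hs
        have h1 : Real.exp (-(t - s) / C) ≤ 1 := by
          apply Real.exp_le_one_iff.2
          apply div_nonpos_of_nonpos_of_nonneg _ hC.le
          linarith [hs.2]
        nlinarith [hV s]
      have hb2 : (∫ s in Ioc T₁ t, V s) ≤ ∫ s in Ioi T₁, V s := by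
        apply setIntegral_mono_set (hVIoi.mono_set (Ioi_subset_Ioi hT₁0))
          (Eventually.of_forall hV)
        exact HasSubset.Subset.eventuallyLE Ioc_subset_Ioi_self
      linarith
    linarith [hJsum, hp1, hp2]
  clear_value J
  -- conclude
  have hkey := hvineq t ht0
  rw [hdecomp, hA] at hkey
  have hexp2 : Real.exp (-t / C) ≤ 1 / 2 := by
    have hlog : C * Real.log 2 ≤ t := le_trans (le_max_right _ _) ht
    have : -t / C ≤ -Real.log 2 := by
      rw [div_le_iff₀ hC]; nlinarith
    calc Real.exp (-t / C) ≤ Real.exp (-Real.log 2) := Real.exp_le_exp.2 this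
      _ = 1 / 2 := by rw [Real.exp_neg, Real.exp_log two_pos]; norm_num
  have heqn : C⁻¹ * (α₁ / 4 * (C * (1 - Real.exp (-t / C))) - C * J)
      = α₁ / 4 * (1 - Real.exp (-t / C)) - J := by
    field_simp
  rw [heqn] at hkey
  have : α₁ / 16 ≤ α₁ / 4 * (1 - Real.exp (-t / C)) - J := by
    rw [hεdef] at hJle
    nlinarith
  linarith
end

section
/- Let a, b : [0,∞) → [0,∞) be locally integrable with ∫_0^T a dt ≤ A and ∫_0^T b dt ≤ B for all T, and let y : [0,T] → [0,∞) be absolutely continuous satisfying y'(t) ≤ a(t) + b(t) y(t) + C₁ y(t)² for a.e. t, with ∫_0^T y(t) dt ≤ D. Then sup_{0≤t≤T} y(t) ≤ C, with C depending only on y(0), A, B, C₁, D (but not on T). -/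
open MeasureTheory Set Filter

theorem stmt17 (y0 A B C₁ D : ℝ) (hy0 : 0 ≤ y0) (hA : 0 ≤ A) (hB : 0 ≤ B)
    (hC₁ : 0 < C₁) (hD : 0 ≤ D) :
    ∃ C : ℝ, 0 < C ∧
      ∀ (T : ℝ) (a b y y' : ℝ → ℝ), 0 < T →
        (∀ t, 0 ≤ a t) → (∀ t, 0 ≤ b t) → (∀ t, 0 ≤ y t) →
        IntegrableOn a (Icc (0:ℝ) T) → IntegrableOn b (Icc (0:ℝ) T) →
        IntegrableOn y (Icc (0:ℝ) T) →
        (∫ t in Icc (0:ℝ) T, a t) ≤ A → (∫ t in Icc (0:ℝ) T, b t) ≤ B →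
        (∫ t in Icc (0:ℝ) T, y t) ≤ D →
        (∀ t ∈ Icc (0:ℝ) T, HasDerivAt y (y' t) t) →
        (∀ᵐ t ∂(volume.restrict (Icc (0:ℝ) T)),
          y' t ≤ a t + b t * y t + C₁ * (y t) ^ 2) →
        y 0 ≤ y0 →
        ∀ t ∈ Icc (0:ℝ) T, y t ≤ C := by
  set K : ℝ := B + C₁ * D with hKdef
  have hK : 0 ≤ K := by positivity
  set n : ℕ := ⌈2 * K⌉₊ with hndef
  have hKn : K ≤ (n : ℝ) / 2 := by
    have := Nat.le_ceil (2 * K)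
    rw [← hndef] at this
    linarith
  have hbase : (1:ℝ) ≤ y0 + 2 * A + 1 := by linarith
  refine ⟨4 ^ (n + 1) * (y0 + 2 * A + 1), by positivity, ?_⟩
  intro T a b y y' hT ha hb hy hai hbi hyi haA hbB hyD hderiv hae hy00
  have hycont : ContinuousOn y (Icc 0 T) := fun t ht =>
    ((hderiv t ht).differentiableAt.continuousAt).continuousWithinAt
  -- bound on y
  obtain ⟨M0, hM0⟩ : ∃ M0 : ℝ, ∀ t ∈ Icc (0:ℝ) T, ‖y t‖ ≤ M0 :=
    IsCompact.exists_bound_of_continuousOn isCompact_Icc hycont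
  have hyae : AEStronglyMeasurable y (volume.restrict (Icc (0:ℝ) T)) :=
    hycont.aestronglyMeasurable measurableSet_Icc
  have hybdd : ∀ᵐ t ∂(volume.restrict (Icc (0:ℝ) T)), ‖y t‖ ≤ M0 :=
    (ae_restrict_iff' measurableSet_Icc).2 (Filter.Eventually.of_forall hM0)
  set h : ℝ → ℝ := fun t => b t + C₁ * y t with hhdef
  have hh : ∀ t, 0 ≤ h t := fun t => by
    have := hb t; have := hy t; simp only [hhdef]; positivity
  have hhi : IntegrableOn h (Icc (0:ℝ) T) := hbi.add (hyi.const_mul C₁)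
  have hhyi : IntegrableOn (fun t => h t * y t) (Icc (0:ℝ) T) := by
    have h1 : IntegrableOn (fun t => y t * h t) (Icc (0:ℝ) T) :=
      Integrable.bdd_mul hhi hyae hybdd
    exact h1.congr (Filter.Eventually.of_forall fun t => mul_comm _ _)
  set φ : ℝ → ℝ := fun t => a t + h t * y t with hφdef
  have hφi : IntegrableOn φ (Icc (0:ℝ) T) := hai.add hhyi
  -- key FTC inequality
  have key : ∀ s t : ℝ, s ∈ Icc (0:ℝ) T → t ∈ Icc (0:ℝ) T → s ≤ t →
      y t - y s ≤ ∫ u in s..t, φ u := by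
    intro s t hs ht hst
    set ψ : ℝ → ℝ := fun u => max (φ u) (y' u) with hψdef
    have hψae : ψ =ᵐ[volume.restrict (Icc (0:ℝ) T)] φ := by
      filter_upwards [hae] with u hu
      have hle : y' u ≤ φ u := by
        simp only [hφdef, hhdef]; nlinarith [sq_nonneg (y u)]
      simp [hψdef, max_eq_left hle]
    have hsub : Icc s t ⊆ Icc (0:ℝ) T := Icc_subset_Icc hs.1 ht.2
    have hψae' : ψ =ᵐ[volume.restrict (Icc s t)] φ :=
      ae_restrict_of_ae_restrict_of_subset hsub hψae
    have hψi : IntegrableOn ψ (Icc s t) := (hφi.mono_set hsub).congr hψae'.symm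
    have hmain : y t - y s ≤ ∫ u in s..t, ψ u := by
      refine intervalIntegral.sub_le_integral_of_hasDeriv_right_of_le hst (hycont.mono hsub)
        (fun x hx => ?_) hψi (fun x hx => le_max_right _ _)
      exact (hderiv x (hsub (Ioo_subset_Icc_self hx))).hasDerivWithinAt
    have heq : (∫ u in s..t, ψ u) = ∫ u in s..t, φ u := by
      rw [intervalIntegral.integral_of_le hst, intervalIntegral.integral_of_le hst]
      exact integral_congr_ae
        (ae_restrict_of_ae_restrict_of_subset Ioc_subset_Icc_self hψae')
    linarith [hmain, heq.le]
  -- chunk lemma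
  have chunk : ∀ s t : ℝ, s ∈ Icc (0:ℝ) T → t ∈ Icc (0:ℝ) T → s ≤ t →
      (∫ u in s..t, h u) ≤ 1 / 2 → ∀ u ∈ Icc s t, y u ≤ 2 * (y s + A) := by
    intro s t hs ht hst hhalf
    have hsub : Icc s t ⊆ Icc (0:ℝ) T := Icc_subset_Icc hs.1 ht.2
    obtain ⟨u₀, hu₀mem, hu₀max⟩ :=
      isCompact_Icc.exists_isMaxOn (nonempty_Icc.2 hst) (hycont.mono hsub)
    set M := y u₀ with hMdef
    have hMle : ∀ u ∈ Icc s t, y u ≤ M := fun u hu => hu₀max hu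
    have hM0 : 0 ≤ M := hy u₀
    have hsu : s ≤ u₀ := hu₀mem.1
    have h1 : y u₀ - y s ≤ ∫ u in s..u₀, φ u := key s u₀ hs (hsub hu₀mem) hsu
    have hIsub : Ioc s u₀ ⊆ Icc (0:ℝ) T :=
      (Ioc_subset_Icc_self.trans (Icc_subset_Icc hs.1 (hsub hu₀mem).2))
    have h2 : (∫ u in s..u₀, a u) ≤ A := by
      rw [intervalIntegral.integral_of_le hsu]
      refine le_trans (setIntegral_mono_set hai ?_ hIsub.eventuallyLE) haA
      exact (ae_restrict_iff' measurableSet_Icc).2 (Filter.Eventually.of_forall fun u _ => ha u)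
    have hhyint : IntervalIntegrable (fun u => h u * y u) volume s u₀ := by
      rw [intervalIntegrable_iff_integrableOn_Ioc_of_le hsu]
      exact hhyi.mono_set hIsub
    have hhint : IntervalIntegrable h volume s u₀ := by
      rw [intervalIntegrable_iff_integrableOn_Ioc_of_le hsu]
      exact hhi.mono_set hIsub
    have hhint' : IntervalIntegrable h volume s t := by
      rw [intervalIntegrable_iff_integrableOn_Ioc_of_le hst]
      exact hhi.mono_set (Ioc_subset_Icc_self.trans hsub)
    have h3 : (∫ u in s..u₀, h u * y u) ≤ M * (1 / 2) := by
      have step1 : (∫ u in s..u₀, h u * y u) ≤ ∫ u in s..u₀, h u * M := by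
        refine intervalIntegral.integral_mono_on hsu hhyint (hhint.mul_const M) ?_
        intro x hx
        exact mul_le_mul_of_nonneg_left (hMle x (Icc_subset_Icc le_rfl hu₀mem.2 hx)) (hh x)
      have step2 : (∫ u in s..u₀, h u * M) = (∫ u in s..u₀, h u) * M := by
        rw [intervalIntegral.integral_mul_const]
      have step3 : (∫ u in s..u₀, h u) ≤ ∫ u in s..t, h u := by
        refine intervalIntegral.integral_mono_interval le_rfl hsu hu₀mem.2 ?_ hhint'
        exact (ae_restrict_iff' measurableSet_Ioc).2
          (Filter.Eventually.of_forall fun u _ => hh u)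
      have := mul_le_mul_of_nonneg_right (step3.trans hhalf) hM0
      nlinarith [step1, step2]
    have hsplit : (∫ u in s..u₀, φ u) = (∫ u in s..u₀, a u) + ∫ u in s..u₀, h u * y u := by
      simp only [hφdef]
      refine intervalIntegral.integral_add ?_ hhyint
      rw [intervalIntegrable_iff_integrableOn_Ioc_of_le hsu]
      exact hai.mono_set hIsub
    intro u hu
    have hyu : y u ≤ M := hMle u hu
    linarith [h1, h2, h3, hsplit, hyu]
  -- primitive G
  set G : ℝ → ℝ := fun t => ∫ u in Ioc (0:ℝ) t, h u with hGdef
  have hG0 : G 0 = 0 := by simp [hGdef]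
  have hGint : ∀ s t : ℝ, s ∈ Icc (0:ℝ) T → t ∈ Icc (0:ℝ) T → s ≤ t →
      G t = G s + ∫ u in s..t, h u := by
    intro s t hs ht hst
    rw [intervalIntegral.integral_of_le hst]
    simp only [hGdef]
    rw [← setIntegral_union (Ioc_disjoint_Ioc_of_le le_rfl) measurableSet_Ioc
      (hhi.mono_set (Ioc_subset_Icc_self.trans (Icc_subset_Icc le_rfl hs.2)))
      (hhi.mono_set (Ioc_subset_Icc_self.trans (Icc_subset_Icc hs.1 ht.2))),
      Ioc_union_Ioc_eq_Ioc hs.1 hst]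
  -- main induction
  have main : ∀ i : ℕ, ∀ t ∈ Icc (0:ℝ) T, G t ≤ (i : ℝ) / 2 →
      y t ≤ 4 ^ (i + 1) * (y0 + 2 * A + 1) := by
    intro i
    induction i with
    | zero =>
      intro t ht hGt
      have hint : (∫ u in (0:ℝ)..t, h u) ≤ 1 / 2 := by
        have := hGint 0 t ⟨le_rfl, hT.le⟩ ht ht.1
        rw [hG0, zero_add] at this
        rw [← this]
        exact hGt.trans (by norm_num)
      have hc := chunk 0 t ⟨le_rfl, hT.le⟩ ht ht.1 hint t ⟨ht.1, le_rfl⟩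
      have h40 : (4:ℝ) ^ (0 + 1) = 4 := by norm_num
      rw [h40]
      linarith [hy00, hc, hy 0]
    | succ i ih =>
      intro t ht hGt
      have hmono : (4:ℝ) ^ (i + 1) * (y0 + 2 * A + 1) ≤ 4 ^ (i + 1 + 1) * (y0 + 2 * A + 1) := by
        have h4 : (4:ℝ) ^ (i + 1) ≤ 4 ^ (i + 1 + 1) :=
          pow_le_pow_right₀ (by norm_num) (Nat.le_succ _)
        nlinarith
      by_cases hcase : G t ≤ (i : ℝ) / 2
      · exact (ih t ht hcase).trans hmono
      · push_neg at hcase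
        have hGcont : ContinuousOn G (Icc 0 t) := by
          simp only [hGdef]
          exact intervalIntegral.continuousOn_primitive (hhi.mono_set (Icc_subset_Icc le_rfl ht.2))
        have hmem : (i : ℝ) / 2 ∈ Icc (G 0) (G t) := by
          rw [hG0]
          exact ⟨by positivity, hcase.le⟩
        obtain ⟨s, hsmem, hGs⟩ := intermediate_value_Icc ht.1 hGcont hmem
        have hsT : s ∈ Icc (0:ℝ) T := ⟨hsmem.1, hsmem.2.trans ht.2⟩
        have hys : y s ≤ 4 ^ (i + 1) * (y0 + 2 * A + 1) := ih s hsT hGs.le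
        have hint : (∫ u in s..t, h u) ≤ 1 / 2 := by
          have heq := hGint s t hsT ht hsmem.2
          rw [hGs] at heq
          push_cast at hGt heq ⊢
          linarith
        have := chunk s t hsT ht hsmem.2 hint t ⟨hsmem.2, le_rfl⟩
        have hpow : (4:ℝ) ^ (i + 1 + 1) = 4 * 4 ^ (i + 1) := by ring
        rw [hpow]
        have hP1 : (1:ℝ) ≤ 4 ^ (i + 1) := one_le_pow₀ (by norm_num)
        have hPA : A * 1 ≤ A * 4 ^ (i + 1) := mul_le_mul_of_nonneg_left hP1 hA
        have hPE : 4 ^ (i + 1) * A ≤ 4 ^ (i + 1) * (y0 + 2 * A + 1) :=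
          mul_le_mul_of_nonneg_left (by linarith) (by positivity)
        nlinarith [hys, this, hPA, hPE]
  intro t ht
  have hGT : G t ≤ (n : ℝ) / 2 := by
    have h1 : G t ≤ ∫ u in Icc (0:ℝ) T, h u := by
      refine setIntegral_mono_set hhi ?_ ?_
      · exact (ae_restrict_iff' measurableSet_Icc).2
          (Filter.Eventually.of_forall fun u _ => hh u)
      · exact HasSubset.Subset.eventuallyLE
          (Ioc_subset_Icc_self.trans (Icc_subset_Icc le_rfl ht.2))
    have h2 : (∫ u in Icc (0:ℝ) T, h u) ≤ K := by
      have : (∫ u in Icc (0:ℝ) T, h u)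
          = (∫ u in Icc (0:ℝ) T, b u) + C₁ * ∫ u in Icc (0:ℝ) T, y u := by
        simp only [hhdef]
        rw [integral_add hbi (hyi.const_mul C₁), integral_const_mul]
      rw [this, hKdef]
      have := mul_le_mul_of_nonneg_left hyD hC₁.le
      linarith
    linarith
  exact main n t ht hGT
end
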